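/- The 2-parameter Clifford-Jacobi polynomials defined by Z_{0,m}^{α,β} = 1 and the recurrence Z_{ℓ+1,m}^{α,β}(x) = [2(α-ℓ)x(1-x²) - 2(β-ℓ)x(1+x²)] Z_{ℓ,m}^{α,β}(x) - (1-x²)(1+x²) ∂Z_{ℓ,m}^{α,β}(x) satisfy the Rodrigues-type formula Z_{ℓ,m}^{α,β}(x) = (-1)^ℓ (1-|x|²)^{ℓ-α}(1+|x|²)^{ℓ-β} ∂^ℓ((1-|x|²)^α (1+|x|²)^β). -/

import Mathlib

open scoped ContDiff

open CliffordAlgebra MeasureTheory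

noncomputable section

/-- The negative-definite quadratic form `x ↦ -Σ_j x_j²` on `ℝ^m`. -/
def Qneg (m : ℕ) : QuadraticForm ℝ (Fin m → ℝ) :=
  -(QuadraticMap.weightedSumSquares ℝ (fun _ : Fin m => (1:ℝ)))

/-- The real Clifford algebra `Cl(m)` with `e_j² = -1` and anticommuting generators. -/
abbrev Cl (m : ℕ) := CliffordAlgebra (Qneg m)

/-- The generators `e_j = ι(e_j)`. -/
def e (m : ℕ) (j : Fin m) : Cl m := ι (Qneg m) (Pi.single j 1)

/-- A fixed basis of the Clifford algebra, used to differentiate (and integrate)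
Clifford-algebra-valued functions componentwise. -/
def clBasis (m : ℕ) : Module.Basis (Module.Basis.ofVectorSpaceIndex ℝ (Cl m)) ℝ (Cl m) :=
  Module.Basis.ofVectorSpace ℝ (Cl m)

/-- The partial derivative `∂_{x_j}` of a Clifford-algebra-valued function,
computed componentwise with respect to a fixed basis. -/
def pderiv (m : ℕ) (j : Fin m) (g : (Fin m → ℝ) → Cl m) (x : Fin m → ℝ) : Cl m :=
  ∑ᶠ i, (fderiv ℝ (fun y => (clBasis m).repr (g y) i) x (Pi.single j 1)) • clBasis m i

/-- The Dirac operator `∂ = Σ_j e_j ∂_{x_j}` (left Clifford multiplication). -/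
def dirac (m : ℕ) (g : (Fin m → ℝ) → Cl m) : (Fin m → ℝ) → Cl m :=
  fun x => ∑ j, e m j * pderiv m j g x

/-- The 2-parameter Clifford-Jacobi polynomials, defined by `Z_0 = 1` and the
recurrence `Z_{ℓ+1}(x) = [2(α-ℓ)x(1-x²) - 2(β-ℓ)x(1+x²)] Z_ℓ(x)
- (1-x²)(1+x²) ∂Z_ℓ(x)`. -/
def Z (m : ℕ) (α β : ℝ) : ℕ → (Fin m → ℝ) → Cl m
  | 0 => fun _ => 1
  | (ℓ + 1) => fun x =>
      ((2 * (α - (ℓ : ℝ))) • (ι (Qneg m) x * (1 - (ι (Qneg m) x) ^ 2))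
        - (2 * (β - (ℓ : ℝ))) • (ι (Qneg m) x * (1 + (ι (Qneg m) x) ^ 2))) * Z m α β ℓ x
      - (1 - (ι (Qneg m) x) ^ 2) * (1 + (ι (Qneg m) x) ^ 2) * dirac m (Z m α β ℓ) x

def SS (m : ℕ) (y : Fin m → ℝ) : ℝ := ∑ j, y j ^ 2

lemma contDiff_SS (m : ℕ) : ContDiff ℝ ∞ (SS m) := by
  unfold SS; apply ContDiff.sum; intro j _
  exact (contDiff_apply ℝ ℝ j).pow 2

lemma SS_nonneg (m : ℕ) (y : Fin m → ℝ) : 0 ≤ SS m y :=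
  Finset.sum_nonneg fun j _ => sq_nonneg _

def U (m : ℕ) : Set (Fin m → ℝ) := {y | SS m y < 1}

lemma isOpen_U (m : ℕ) : IsOpen (U m) :=
  isOpen_lt (contDiff_SS m).continuous continuous_const

lemma hasFDerivAt_SS (m : ℕ) (x : Fin m → ℝ) :
    HasFDerivAt (SS m) (∑ j, (2 * x j) • (ContinuousLinearMap.proj j : (Fin m → ℝ) →L[ℝ] ℝ)) x := by
  unfold SS
  have : ∀ j : Fin m, HasFDerivAt (fun y : Fin m → ℝ => y j ^ 2)
      ((2 * x j) • (ContinuousLinearMap.proj j : (Fin m → ℝ) →L[ℝ] ℝ)) x := by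
    intro j
    have h := ((ContinuousLinearMap.proj j : (Fin m → ℝ) →L[ℝ] ℝ).hasFDerivAt (x := x)).mul
      ((ContinuousLinearMap.proj j : (Fin m → ℝ) →L[ℝ] ℝ).hasFDerivAt (x := x))
    have hf : (fun y : Fin m → ℝ => y j ^ 2) = ⇑(ContinuousLinearMap.proj j : (Fin m → ℝ) →L[ℝ] ℝ) * ⇑(ContinuousLinearMap.proj j : (Fin m → ℝ) →L[ℝ] ℝ) := by
      funext y; simp [sq]
    rw [hf]
    simpa [sq, two_mul, add_smul, mul_smul] using h
  simpa using HasFDerivAt.fun_sum (fun j (_ : j ∈ Finset.univ) => this j)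

lemma fderiv_SS_apply (m : ℕ) (x : Fin m → ℝ) (j : Fin m) :
    fderiv ℝ (SS m) x (Pi.single j 1) = 2 * x j := by
  rw [(hasFDerivAt_SS m x).fderiv]
  simp [ContinuousLinearMap.proj, Pi.single_apply, Finset.sum_ite_eq', mul_comm]

section Aux
variable {m : ℕ}

lemma sum_repr_of_support (v : Cl m) (T : Finset (Module.Basis.ofVectorSpaceIndex ℝ (Cl m)))
    (h : ∀ i ∉ T, (clBasis m).repr v i = 0) :
    ∑ i ∈ T, (clBasis m).repr v i • clBasis m i = v := by
  have hsub : ((clBasis m).repr v).support ⊆ T := by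
    intro i hi
    by_contra hiT
    exact (Finsupp.mem_support_iff.mp hi) (h i hiT)
  have := (clBasis m).linearCombination_repr v
  rw [Finsupp.linearCombination_apply] at this
  rw [Finsupp.sum_of_support_subset _ hsub _ (by intro i _; simp)] at this
  exact this

lemma pderiv_eq (g : (Fin m → ℝ) → Cl m) (T : Finset (Module.Basis.ofVectorSpaceIndex ℝ (Cl m)))
    (hT : ∀ y, ∀ i ∉ T, (clBasis m).repr (g y) i = 0) (j : Fin m) (x : Fin m → ℝ) :
    pderiv m j g x = ∑ i ∈ T,
      (fderiv ℝ (fun y => (clBasis m).repr (g y) i) x (Pi.single j 1)) • clBasis m i := by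
  apply finsum_eq_sum_of_support_subset
  intro i hi
  by_contra hiT
  apply hi
  have hz : (fun y => (clBasis m).repr (g y) i) = fun _ => 0 := funext fun y => hT y i hiT
  simp [hz]


def Good (m : ℕ) (g : (Fin m → ℝ) → Cl m)
    (T : Finset (Module.Basis.ofVectorSpaceIndex ℝ (Cl m))) : Prop :=
  (∀ y, ∀ i ∉ T, (clBasis m).repr (g y) i = 0) ∧
  (∀ i, ContDiffOn ℝ ∞ (fun y => (clBasis m).repr (g y) i) (U m))

lemma dirac_formula (g : (Fin m → ℝ) → Cl m) (T : Finset (Module.Basis.ofVectorSpaceIndex ℝ (Cl m)))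
    (hT : ∀ y, ∀ i ∉ T, (clBasis m).repr (g y) i = 0) (x : Fin m → ℝ) :
    dirac m g x = ∑ j, ∑ i ∈ T,
      (fderiv ℝ (fun y => (clBasis m).repr (g y) i) x (Pi.single j 1)) • (e m j * clBasis m i) := by
  unfold dirac
  refine Finset.sum_congr rfl fun j _ => ?_
  rw [pderiv_eq g T hT j x, Finset.mul_sum]
  exact Finset.sum_congr rfl fun i _ => mul_smul_comm _ _ _

open scoped Classical in
lemma good_dirac {g : (Fin m → ℝ) → Cl m} {T : Finset (Module.Basis.ofVectorSpaceIndex ℝ (Cl m))}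
    (hg : Good m g T) :
    Good m (dirac m g)
      (Finset.univ.biUnion fun j => T.biUnion fun i =>
        ((clBasis m).repr (e m j * clBasis m i)).support) := by
  obtain ⟨hsup, hsm⟩ := hg
  have hrepr : ∀ x k, (clBasis m).repr (dirac m g x) k = ∑ j, ∑ i ∈ T,
      (fderiv ℝ (fun y => (clBasis m).repr (g y) i) x (Pi.single j 1)) *
        ((clBasis m).repr (e m j * clBasis m i) k) := by
    intro x k
    rw [dirac_formula g T hsup x]
    simp [Finsupp.finset_sum_apply]
  constructor
  · intro y k hk
    rw [hrepr y k]
    apply Finset.sum_eq_zero; intro j _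
    apply Finset.sum_eq_zero; intro i hi
    have : (clBasis m).repr (e m j * clBasis m i) k = 0 := by
      by_contra hne
      exact hk (Finset.mem_biUnion.mpr ⟨j, Finset.mem_univ j,
        Finset.mem_biUnion.mpr ⟨i, hi, Finsupp.mem_support_iff.mpr hne⟩⟩)
    rw [this, mul_zero]
  · intro k
    have : (fun y => (clBasis m).repr (dirac m g y) k) = fun y => ∑ j, ∑ i ∈ T,
        (fderiv ℝ (fun z => (clBasis m).repr (g z) i) y (Pi.single j 1)) *
          ((clBasis m).repr (e m j * clBasis m i) k) := funext fun y => hrepr y k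
    rw [this]
    apply ContDiffOn.sum; intro j _
    apply ContDiffOn.sum; intro i _
    apply ContDiffOn.mul _ contDiffOn_const
    have h1 : ContDiffOn ℝ ∞ (fderiv ℝ (fun z => (clBasis m).repr (g z) i)) (U m) :=
      ((contDiffOn_infty_iff_fderiv_of_isOpen (isOpen_U m)).mp (hsm i)).2
    exact h1.clm_apply contDiffOn_const

lemma pderiv_congr {g₁ g₂ : (Fin m → ℝ) → Cl m} (h : ∀ y ∈ U m, g₁ y = g₂ y)
    {x : Fin m → ℝ} (hx : x ∈ U m) (j : Fin m) :
    pderiv m j g₁ x = pderiv m j g₂ x := by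
  unfold pderiv
  apply finsum_congr; intro i
  have : fderiv ℝ (fun y => (clBasis m).repr (g₁ y) i) x
      = fderiv ℝ (fun y => (clBasis m).repr (g₂ y) i) x := by
    apply Filter.EventuallyEq.fderiv_eq
    filter_upwards [(isOpen_U m).mem_nhds hx] with y hy
    rw [h y hy]
  rw [this]

lemma dirac_congr {g₁ g₂ : (Fin m → ℝ) → Cl m} (h : ∀ y ∈ U m, g₁ y = g₂ y)
    {x : Fin m → ℝ} (hx : x ∈ U m) :
    dirac m g₁ x = dirac m g₂ x := by
  unfold dirac
  exact Finset.sum_congr rfl fun j _ => by rw [pderiv_congr h hx j]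


lemma iota_eq_sum (v : Fin m → ℝ) : ι (Qneg m) v = ∑ j, v j • e m j := by
  have hv : v = ∑ j, Pi.single j (v j) := by rw [Finset.univ_sum_single]
  calc ι (Qneg m) v = ι (Qneg m) (∑ j, Pi.single j (v j)) := by rw [← hv]
    _ = ∑ j, ι (Qneg m) (Pi.single j (v j)) := map_sum _ _ _
    _ = ∑ j, v j • e m j := by
        refine Finset.sum_congr rfl fun j _ => ?_
        rw [e, ← _root_.map_smul]
        congr 1
        ext k
        by_cases h : k = j <;> simp [h, Pi.single_apply]

lemma repr_smul_one_apply (c : ℝ) (i : Module.Basis.ofVectorSpaceIndex ℝ (Cl m)) :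
    (clBasis m).repr (algebraMap ℝ (Cl m) c) i = c * (clBasis m).repr 1 i := by
  rw [Algebra.algebraMap_eq_smul_one, _root_.map_smul]
  simp

lemma good_scalar (w : (Fin m → ℝ) → ℝ) (hw : ContDiffOn ℝ ∞ w (U m)) :
    Good m (fun y => algebraMap ℝ (Cl m) (w y)) ((clBasis m).repr 1).support := by
  constructor
  · intro y i hi
    rw [repr_smul_one_apply]
    rw [Finsupp.notMem_support_iff.mp hi, mul_zero]
  · intro i
    have : (fun y => (clBasis m).repr (algebraMap ℝ (Cl m) (w y)) i)
        = fun y => w y * (clBasis m).repr 1 i := funext fun y => repr_smul_one_apply _ _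
    rw [this]
    exact hw.mul contDiffOn_const

lemma pderiv_smul (c : (Fin m → ℝ) → ℝ) (g : (Fin m → ℝ) → Cl m)
    (T : Finset (Module.Basis.ofVectorSpaceIndex ℝ (Cl m)))
    (hT : ∀ y, ∀ i ∉ T, (clBasis m).repr (g y) i = 0) (x : Fin m → ℝ)
    (hgd : ∀ i, DifferentiableAt ℝ (fun y => (clBasis m).repr (g y) i) x)
    (hc : DifferentiableAt ℝ c x) (j : Fin m) :
    pderiv m j (fun y => c y • g y) x
      = (fderiv ℝ c x (Pi.single j 1)) • g x + c x • pderiv m j g x := by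
  have hT' : ∀ y, ∀ i ∉ T, (clBasis m).repr (c y • g y) i = 0 := by
    intro y i hi
    rw [_root_.map_smul]
    simp [hT y i hi]
  rw [pderiv_eq _ T hT' j x, pderiv_eq g T hT j x]
  have key : ∀ i : Module.Basis.ofVectorSpaceIndex ℝ (Cl m),
      fderiv ℝ (fun y => (clBasis m).repr (c y • g y) i) x (Pi.single j 1)
        = c x * (fderiv ℝ (fun y => (clBasis m).repr (g y) i) x (Pi.single j 1))
          + (clBasis m).repr (g x) i * (fderiv ℝ c x (Pi.single j 1)) := by
    intro i
    have heq : (fun y => (clBasis m).repr (c y • g y) i)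
        = fun y => c y * (clBasis m).repr (g y) i := by
      funext y; rw [_root_.map_smul]; simp
    rw [heq, fderiv_fun_mul hc (hgd i)]
    simp
  calc ∑ i ∈ T, (fderiv ℝ (fun y => (clBasis m).repr (c y • g y) i) x (Pi.single j 1)) • clBasis m i
      = ∑ i ∈ T, ((fderiv ℝ c x (Pi.single j 1)) • ((clBasis m).repr (g x) i • clBasis m i)
          + c x • ((fderiv ℝ (fun y => (clBasis m).repr (g y) i) x (Pi.single j 1)) • clBasis m i)) := by
        refine Finset.sum_congr rfl fun i _ => ?_
        rw [key i, add_smul, smul_smul, smul_smul, mul_comm ((clBasis m).repr (g x) i), add_comm]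
    _ = (fderiv ℝ c x (Pi.single j 1)) • g x + c x • ∑ i ∈ T,
          (fderiv ℝ (fun y => (clBasis m).repr (g y) i) x (Pi.single j 1)) • clBasis m i := by
        rw [Finset.sum_add_distrib, ← Finset.smul_sum, ← Finset.smul_sum,
          sum_repr_of_support (g x) T (hT x)]

lemma dirac_smul (c : (Fin m → ℝ) → ℝ) (g : (Fin m → ℝ) → Cl m)
    (T : Finset (Module.Basis.ofVectorSpaceIndex ℝ (Cl m)))
    (hT : ∀ y, ∀ i ∉ T, (clBasis m).repr (g y) i = 0) (x : Fin m → ℝ)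
    (hgd : ∀ i, DifferentiableAt ℝ (fun y => (clBasis m).repr (g y) i) x)
    (hc : DifferentiableAt ℝ c x) :
    dirac m (fun y => c y • g y) x
      = ι (Qneg m) (fun j => fderiv ℝ c x (Pi.single j 1)) * g x + c x • dirac m g x := by
  unfold dirac
  rw [iota_eq_sum, Finset.sum_mul, Finset.smul_sum, ← Finset.sum_add_distrib]
  refine Finset.sum_congr rfl fun j _ => ?_
  rw [pderiv_smul c g T hT x hgd hc j, mul_add, mul_smul_comm, mul_smul_comm, smul_mul_assoc]


lemma contDiffOn_rpow2 (p q : ℝ) :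
    ContDiffOn ℝ ∞ (fun y => (1 - SS m y) ^ p * (1 + SS m y) ^ q) (U m) := by
  intro y hy
  have h1 : (0:ℝ) < 1 - SS m y := by simpa [sub_pos, U] using hy
  have h2 : (0:ℝ) < 1 + SS m y := by linarith [SS_nonneg m y]
  apply ContDiffAt.contDiffWithinAt
  apply ContDiffAt.mul
  · exact (Real.contDiffAt_rpow_const_of_ne (ne_of_gt h1)).comp y
      (contDiffAt_const.sub (contDiff_SS m).contDiffAt)
  · exact (Real.contDiffAt_rpow_const_of_ne (ne_of_gt h2)).comp y
      (contDiffAt_const.add (contDiff_SS m).contDiffAt)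

lemma LSS_apply (x : Fin m → ℝ) (j : Fin m) :
    (∑ j', (2 * x j') • (ContinuousLinearMap.proj j' : (Fin m → ℝ) →L[ℝ] ℝ))
      (Pi.single j 1) = 2 * x j := by
  simp [ContinuousLinearMap.proj, Pi.single_apply, Finset.sum_ite_eq', mul_comm]

lemma hasFDerivAt_scalar (E p q : ℝ) (x : Fin m → ℝ) (h1 : (0:ℝ) < 1 - SS m x) :
    HasFDerivAt (fun y => E * ((1 - SS m y) ^ p * (1 + SS m y) ^ q))
      ((E * (-(p * (1 - SS m x) ^ (p - 1)) * (1 + SS m x) ^ q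
          + (1 - SS m x) ^ p * (q * (1 + SS m x) ^ (q - 1)))) •
        (∑ j, (2 * x j) • (ContinuousLinearMap.proj j : (Fin m → ℝ) →L[ℝ] ℝ))) x := by
  have h2 : (0:ℝ) < 1 + SS m x := by linarith [SS_nonneg m x]
  set s := SS m x with hs
  have hd1 : HasDerivAt (fun t : ℝ => (1 - t) ^ p) (p * (1 - s) ^ (p - 1) * (-1)) s := by
    have ho : HasDerivAt (fun u : ℝ => u ^ p) (p * (1 - s) ^ (p - 1)) (1 - s) :=
      Real.hasDerivAt_rpow_const (Or.inl (ne_of_gt h1))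
    exact ho.comp s ((hasDerivAt_id s).const_sub 1)
  have hd2 : HasDerivAt (fun t : ℝ => (1 + t) ^ q) (q * (1 + s) ^ (q - 1) * 1) s := by
    have ho : HasDerivAt (fun u : ℝ => u ^ q) (q * (1 + s) ^ (q - 1)) (1 + s) :=
      Real.hasDerivAt_rpow_const (Or.inl (ne_of_gt h2))
    exact ho.comp s ((hasDerivAt_id s).const_add 1)
  have hprod := hd1.mul hd2
  have hF := hprod.comp_hasFDerivAt x (hasFDerivAt_SS m x)
  have hE := hF.const_mul E
  refine hE.congr_fderiv ?_
  rw [smul_smul]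
  congr 1
  ring


lemma Qneg_apply (x : Fin m → ℝ) : Qneg m x = -SS m x := by
  simp [Qneg, SS, QuadraticMap.weightedSumSquares_apply, sq]

def cf (m : ℕ) (α β : ℝ) (ℓ : ℕ) : (Fin m → ℝ) → ℝ := fun y =>
  (-1:ℝ)^ℓ * (1 - SS m y) ^ ((ℓ:ℝ) - α) * (1 + SS m y) ^ ((ℓ:ℝ) - β)

def dCf (m : ℕ) (α β : ℝ) (ℓ : ℕ) (x : Fin m → ℝ) : ℝ :=
  (-1:ℝ)^ℓ * (-(((ℓ:ℝ)-α) * (1 - SS m x) ^ ((ℓ:ℝ)-α-1)) * (1 + SS m x) ^ ((ℓ:ℝ)-β)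
    + (1 - SS m x) ^ ((ℓ:ℝ)-α) * (((ℓ:ℝ)-β) * (1 + SS m x) ^ ((ℓ:ℝ)-β-1)))

lemma hasFDerivAt_cf (α β : ℝ) (ℓ : ℕ) (x : Fin m → ℝ) (h1 : (0:ℝ) < 1 - SS m x) :
    HasFDerivAt (cf m α β ℓ) ((dCf m α β ℓ x) •
      (∑ j, (2 * x j) • (ContinuousLinearMap.proj j : (Fin m → ℝ) →L[ℝ] ℝ))) x := by
  have h := hasFDerivAt_scalar ((-1:ℝ)^ℓ) ((ℓ:ℝ)-α) ((ℓ:ℝ)-β) x h1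
  have hcfun : cf m α β ℓ = fun y =>
      ((-1:ℝ)^ℓ) * ((1 - SS m y) ^ ((ℓ:ℝ)-α) * (1 + SS m y) ^ ((ℓ:ℝ)-β)) := by
    funext y; unfold cf; ring
  rw [hcfun, dCf]
  exact h

lemma goodF (α β : ℝ) (ℓ : ℕ) : ∃ T, Good m ((dirac m)^[ℓ]
    (fun y => algebraMap ℝ (Cl m) ((1 - SS m y) ^ α * (1 + SS m y) ^ β))) T := by
  induction ℓ with
  | zero =>
    refine ⟨((clBasis m).repr 1).support, ?_⟩
    rw [Function.iterate_zero, id_eq]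
    exact good_scalar _ (contDiffOn_rpow2 α β)
  | succ ℓ ih =>
    obtain ⟨T, hT⟩ := ih
    have h := good_dirac hT
    rw [← Function.iterate_succ_apply' (dirac m) ℓ] at h
    exact ⟨_, h⟩

lemma id1 (α β s : ℝ) (ℓ : ℕ) (h1 : (0:ℝ) < 1 - s) (h2 : (0:ℝ) < 1 + s) :
    (2*(α-(ℓ:ℝ))*(1+s) - 2*(β-(ℓ:ℝ))*(1-s)) * ((-1:ℝ)^ℓ * (1-s)^((ℓ:ℝ)-α) * (1+s)^((ℓ:ℝ)-β))
      = (1+s)*(1-s) * (2 * ((-1:ℝ)^ℓ * (-(((ℓ:ℝ)-α) * (1-s)^((ℓ:ℝ)-α-1)) * (1+s)^((ℓ:ℝ)-β)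
          + (1-s)^((ℓ:ℝ)-α) * (((ℓ:ℝ)-β) * (1+s)^((ℓ:ℝ)-β-1))))) := by
  have hA : (1-s)^((ℓ:ℝ)-α) = (1-s)^((ℓ:ℝ)-α-1) * (1-s) := by
    rw [← Real.rpow_add_one (ne_of_gt h1) ((ℓ:ℝ)-α-1), sub_add_cancel]
  have hB : (1+s)^((ℓ:ℝ)-β) = (1+s)^((ℓ:ℝ)-β-1) * (1+s) := by
    rw [← Real.rpow_add_one (ne_of_gt h2) ((ℓ:ℝ)-β-1), sub_add_cancel]
  rw [hA, hB]; ring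

lemma id2 (α β s : ℝ) (ℓ : ℕ) (h1 : (0:ℝ) < 1 - s) (h2 : (0:ℝ) < 1 + s) :
    -((1+s)*(1-s) * ((-1:ℝ)^ℓ * (1-s)^((ℓ:ℝ)-α) * (1+s)^((ℓ:ℝ)-β)))
      = (-1:ℝ)^(ℓ+1) * (1-s)^(((ℓ+1:ℕ):ℝ)-α) * (1+s)^(((ℓ+1:ℕ):ℝ)-β) := by
  have hA : (1-s)^(((ℓ+1:ℕ):ℝ)-α) = (1-s)^((ℓ:ℝ)-α) * (1-s) := by
    rw [show ((ℓ+1:ℕ):ℝ)-α = ((ℓ:ℝ)-α)+1 by push_cast; ring,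
      Real.rpow_add_one (ne_of_gt h1)]
  have hB : (1+s)^(((ℓ+1:ℕ):ℝ)-β) = (1+s)^((ℓ:ℝ)-β) * (1+s) := by
    rw [show ((ℓ+1:ℕ):ℝ)-β = ((ℓ:ℝ)-β)+1 by push_cast; ring,
      Real.rpow_add_one (ne_of_gt h2)]
  rw [hA, hB, pow_succ]; ring

lemma key (α β : ℝ) (ℓ : ℕ) :
    ∀ x ∈ U m, Z m α β ℓ x =
      ((-1:ℝ)^ℓ * (1 - SS m x) ^ ((ℓ:ℝ) - α) * (1 + SS m x) ^ ((ℓ:ℝ) - β)) •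
        (dirac m)^[ℓ] (fun y => algebraMap ℝ (Cl m)
          ((1 - SS m y) ^ α * (1 + SS m y) ^ β)) x := by
  induction ℓ with
  | zero =>
    intro x hx
    have h1 : (0:ℝ) < 1 - SS m x := by simpa [sub_pos, U] using hx
    have h2 : (0:ℝ) < 1 + SS m x := by linarith [SS_nonneg m x]
    simp only [Function.iterate_zero_apply, Z, pow_zero, Nat.cast_zero, zero_sub, one_mul]
    rw [Algebra.algebraMap_eq_smul_one, smul_smul]
    have e1 : (1 - SS m x) ^ (-α) * (1 - SS m x) ^ α = 1 := by
      rw [← Real.rpow_add h1]; simp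
    have e2 : (1 + SS m x) ^ (-β) * (1 + SS m x) ^ β = 1 := by
      rw [← Real.rpow_add h2]; simp
    have hone : (1 - SS m x) ^ (-α) * (1 + SS m x) ^ (-β)
        * ((1 - SS m x) ^ α * (1 + SS m x) ^ β) = 1 := by
      calc (1 - SS m x) ^ (-α) * (1 + SS m x) ^ (-β)
            * ((1 - SS m x) ^ α * (1 + SS m x) ^ β)
          = ((1 - SS m x) ^ (-α) * (1 - SS m x) ^ α)
            * ((1 + SS m x) ^ (-β) * (1 + SS m x) ^ β) := by ring
        _ = 1 := by rw [e1, e2, one_mul]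
    rw [hone, one_smul]
  | succ ℓ ih =>
    intro x hx
    have h1 : (0:ℝ) < 1 - SS m x := by simpa [sub_pos, U] using hx
    have h2 : (0:ℝ) < 1 + SS m x := by linarith [SS_nonneg m x]
    obtain ⟨T, hTsup, hTsm⟩ := goodF (m := m) α β ℓ
    rw [Function.iterate_succ_apply']
    set G := (dirac m)^[ℓ] (fun y => algebraMap ℝ (Cl m)
      ((1 - SS m y) ^ α * (1 + SS m y) ^ β)) with hG
    -- differentiability of components of G at x
    have hgd : ∀ i, DifferentiableAt ℝ (fun y => (clBasis m).repr (G y) i) x := by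
      intro i
      have hCD := (hTsm i).contDiffAt ((isOpen_U m).mem_nhds hx)
      exact hCD.differentiableAt (by norm_num)
    have hcD := hasFDerivAt_cf α β ℓ x h1
    have hcdiff : DifferentiableAt ℝ (cf m α β ℓ) x := hcD.differentiableAt
    have hZeq : ∀ y ∈ U m, Z m α β ℓ y = cf m α β ℓ y • G y := by
      intro y hy
      rw [ih y hy]
      rfl
    have hdirZ : dirac m (Z m α β ℓ) x = dirac m (fun y => cf m α β ℓ y • G y) x :=
      dirac_congr hZeq hx
    have hsmul := dirac_smul (cf m α β ℓ) G T hTsup x hgd hcdiff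
    have hι : ι (Qneg m) (fun j => fderiv ℝ (cf m α β ℓ) x (Pi.single j 1))
        = (2 * dCf m α β ℓ x) • ι (Qneg m) x := by
      have hf : (fun j => fderiv ℝ (cf m α β ℓ) x (Pi.single j 1))
          = (2 * dCf m α β ℓ x) • x := by
        funext j
        rw [hcD.fderiv]
        simp only [ContinuousLinearMap.smul_apply, LSS_apply, Pi.smul_apply, smul_eq_mul]
        ring
      rw [hf, _root_.map_smul]
    -- Clifford scalar facts
    have hι2 : (ι (Qneg m) x)^2 = algebraMap ℝ (Cl m) (-SS m x) := by
      rw [sq, ι_sq_scalar, Qneg_apply]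
    have hminus : 1 - (ι (Qneg m) x)^2 = algebraMap ℝ (Cl m) (1 + SS m x) := by
      rw [hι2, ← map_one (algebraMap ℝ (Cl m)), ← map_sub]
      simp [sub_neg_eq_add]
    have hplus : 1 + (ι (Qneg m) x)^2 = algebraMap ℝ (Cl m) (1 - SS m x) := by
      rw [hι2, ← map_one (algebraMap ℝ (Cl m)), ← map_add]
      try congr 1
      try ring
    have hmulalg : ∀ c : ℝ, ι (Qneg m) x * algebraMap ℝ (Cl m) c = c • ι (Qneg m) x := by
      intro c
      rw [← Algebra.commutes c (ι (Qneg m) x)]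
      exact (Algebra.smul_def c _).symm
    have hZrec : Z m α β (ℓ+1) x
        = (2*(α-(ℓ:ℝ))*(1+SS m x) - 2*(β-(ℓ:ℝ))*(1-SS m x)) • (ι (Qneg m) x * Z m α β ℓ x)
          - ((1+SS m x)*(1-SS m x)) • dirac m (Z m α β ℓ) x := by
      simp only [Z]
      rw [hminus, hplus, hmulalg, hmulalg, smul_smul, smul_smul, ← sub_smul, ← map_mul,
        ← smul_mul_assoc, ← Algebra.smul_def]
    rw [hZrec, hZeq x hx, hdirZ, hsmul, hι]
    rw [mul_smul_comm, smul_smul, smul_mul_assoc, smul_add, smul_smul, smul_smul]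
    have hid1 : (2*(α-(ℓ:ℝ))*(1+SS m x) - 2*(β-(ℓ:ℝ))*(1-SS m x)) * cf m α β ℓ x
        = (1+SS m x)*(1-SS m x) * (2 * dCf m α β ℓ x) :=
      id1 α β (SS m x) ℓ h1 h2
    have hid2 : -((1+SS m x)*(1-SS m x) * cf m α β ℓ x)
        = (-1:ℝ)^(ℓ+1) * (1-SS m x)^(((ℓ+1:ℕ):ℝ)-α) * (1+SS m x)^(((ℓ+1:ℕ):ℝ)-β) :=
      id2 α β (SS m x) ℓ h1 h2
    rw [hid1, sub_add_eq_sub_sub, sub_self, zero_sub, ← neg_smul, hid2]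

end Aux
/-- the Rodrigues-type formula
`Z_ℓ(x) = (-1)^ℓ (1-|x|²)^{ℓ-α} (1+|x|²)^{ℓ-β} ∂^ℓ((1-|x|²)^α (1+|x|²)^β)`
on `|x| < 1`. -/
theorem Z_rodrigues (m : ℕ) (α β : ℝ) (ℓ : ℕ) (x : Fin m → ℝ)
    (hx : ∑ j, x j ^ 2 < 1) :
    Z m α β ℓ x =
      ((-1 : ℝ) ^ ℓ * (1 - ∑ j, x j ^ 2) ^ ((ℓ : ℝ) - α)
          * (1 + ∑ j, x j ^ 2) ^ ((ℓ : ℝ) - β)) •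
        (dirac m)^[ℓ] (fun y => algebraMap ℝ (Cl m)
          ((1 - ∑ j, y j ^ 2) ^ α * (1 + ∑ j, y j ^ 2) ^ β)) x := by
  exact key (m := m) α β ℓ x hx
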